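/- (Appendix B, insertion lemma, stated for a fixed representation) Let A be a unital C*-algebra and u_{ij} ∈ A (1 ≤ i,j ≤ n) be self-adjoint. Let p ∈ P(0,l) and q ∈ P(0,m) be partitions on lower points only such that the relations R(p) and R(q) hold for the u_{ij}. Then for every 0 ≤ t ≤ l, the relations R(p') hold, where p' ∈ P(0, l+m) is the partition obtained from placing q between the t-th and (t+1)-th point of p (the m points of q are inserted after position t; the blocks of p and of q are kept separate). -/

import Mathlib

open scoped Classical

namespace PartitionCstar

/-- A partition in `P(k,l)`: an equivalence relation (whose classes are the blocks)
on the disjoint union of `k` upper points and `l` lower points. -/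
abbrev Partition (k l : ℕ) := Setoid (Fin k ⊕ Fin l)

/-- `labelsMatch p α β` holds iff, labelling the upper points by `α` and the lower points
by `β`, the strings (blocks) of `p` connect only equal indices. -/
def labelsMatch {n k l : ℕ} (p : Partition k l) (α : Fin k → Fin n) (β : Fin l → Fin n) :
    Prop :=
  ∀ x y : Fin k ⊕ Fin l, p.r x y → Sum.elim α β x = Sum.elim α β y

/-- The delta function `δ_p(α,β) ∈ {0,1}`. -/
noncomputable def delta {n k l : ℕ} (p : Partition k l) (α : Fin k → Fin n)
    (β : Fin l → Fin n) : ℕ :=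
  if labelsMatch p α β then 1 else 0

/-- The relations `R(p)` for a matrix of elements `u` of a unital ring:
`∑_γ δ_p(γ,β) u_{γ₁α₁}⋯u_{γₖαₖ} = ∑_{γ'} δ_p(α,γ') u_{β₁γ'₁}⋯u_{β_lγ'_l}`.
(For `k = 0` resp. `l = 0` the empty product is `1`, which yields the conventions
`δ_p(∅,β)·1` resp. `δ_p(α,∅)·1`.) -/
def SatisfiesRel {A : Type*} [Ring A] {n : ℕ} (u : Fin n → Fin n → A)
    {k l : ℕ} (p : Partition k l) : Prop :=
  ∀ (α : Fin k → Fin n) (β : Fin l → Fin n),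
    (∑ γ : Fin k → Fin n,
      if labelsMatch p γ β then (List.ofFn fun s => u (γ s) (α s)).prod else 0)
    = ∑ γ' : Fin l → Fin n,
      if labelsMatch p α γ' then (List.ofFn fun t => u (β t) (γ' t)).prod else 0

/-- The disjoint union of two set partitions. -/
def sumPartition {X Y : Type*} (p : Setoid X) (q : Setoid Y) : Setoid (X ⊕ Y) where
  r := Sum.LiftRel p.r q.r
  iseqv := by
    refine ⟨fun a => ?_, fun {a b} h => ?_, fun {a b c} h₁ h₂ => ?_⟩
    · cases a with
      | inl x => exact Sum.LiftRel.inl (p.iseqv.refl x)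
      | inr y => exact Sum.LiftRel.inr (q.iseqv.refl y)
    · cases h with
      | inl h => exact Sum.LiftRel.inl (p.iseqv.symm h)
      | inr h => exact Sum.LiftRel.inr (q.iseqv.symm h)
    · cases h₁ with
      | inl h₁ =>
        cases h₂ with
        | inl h₂ => exact Sum.LiftRel.inl (p.iseqv.trans h₁ h₂)
      | inr h₁ =>
        cases h₂ with
        | inr h₂ => exact Sum.LiftRel.inr (q.iseqv.trans h₁ h₂)

/-- Reindexing equivalence for the tensor product of partitions. -/
def tensorEquiv (k l k' l' : ℕ) :
    (Fin (k + k') ⊕ Fin (l + l')) ≃ ((Fin k ⊕ Fin l) ⊕ (Fin k' ⊕ Fin l')) :=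
  (Equiv.sumCongr finSumFinEquiv.symm finSumFinEquiv.symm).trans
    (Equiv.sumSumSumComm (Fin k) (Fin k') (Fin l) (Fin l'))

/-- The tensor product `p ⊗ q` of two partitions: horizontal concatenation,
blocks kept separate. -/
def tensor {k l k' l' : ℕ} (p : Partition k l) (q : Partition k' l') :
    Partition (k + k') (l + l') :=
  Setoid.comap (tensorEquiv k l k' l') (sumPartition p q)

/-- The join of `p ∈ P(k,l)` and `q ∈ P(l,m)` on the `k` upper, `l` middle and
`m` lower points, identifying the lower points of `p` with the upper points of `q`. -/
def compJoin {k l m : ℕ} (q : Partition l m) (p : Partition k l) :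
    Setoid (Fin k ⊕ (Fin l ⊕ Fin m)) :=
  (Setoid.comap (Equiv.sumAssoc (Fin k) (Fin l) (Fin m)).symm
      (sumPartition p (⊥ : Setoid (Fin m))))
    ⊔ sumPartition (⊥ : Setoid (Fin k)) q

/-- The composition `qp ∈ P(k,m)` of `q ∈ P(l,m)` below `p ∈ P(k,l)`: restriction
of the join to the upper and lower points. -/
def comp {k l m : ℕ} (q : Partition l m) (p : Partition k l) : Partition k m :=
  Setoid.comap (Sum.map id Sum.inr : Fin k ⊕ Fin m → Fin k ⊕ (Fin l ⊕ Fin m))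
    (compJoin q p)

/-- Middle points in the composition procedure. -/
def IsMiddle {k l m : ℕ} : Fin k ⊕ (Fin l ⊕ Fin m) → Prop
  | Sum.inr (Sum.inl _) => True
  | _ => False

/-- `rl q p`: the number of removed loops in the composition of `q` and `p`, i.e. the
number of blocks of the join consisting entirely of middle points. -/
noncomputable def rl {k l m : ℕ} (q : Partition l m) (p : Partition k l) : ℕ :=
  Nat.card {c : Quotient (compJoin q p) //
    ∀ x : Fin k ⊕ (Fin l ⊕ Fin m), Quotient.mk (compJoin q p) x = c → IsMiddle x}

/-- The involution `p* ∈ P(l,k)`: turning `p ∈ P(k,l)` upside down. -/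
def involution {k l : ℕ} (p : Partition k l) : Partition l k :=
  Setoid.comap (Equiv.sumComm (Fin l) (Fin k)) p

/-- The vertical reflection `p̃ ∈ P(k,l)`: reflecting `p` at the vertical axis. -/
def reflect {k l : ℕ} (p : Partition k l) : Partition k l :=
  Setoid.comap (Sum.map Fin.rev Fin.rev) p

/-- The setoid relating `x` and `y` (and nothing else besides equality). -/
def pairSetoid {X : Type*} (x y : X) : Setoid X where
  r a b := a = b ∨ (a = x ∧ b = y) ∨ (a = y ∧ b = x)
  iseqv := by
    refine ⟨fun a => Or.inl rfl, fun {a b} h => ?_, fun {a b c} h₁ h₂ => ?_⟩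
    · rcases h with rfl | ⟨ha, hb⟩ | ⟨ha, hb⟩
      · exact Or.inl rfl
      · exact Or.inr (Or.inr ⟨hb, ha⟩)
      · exact Or.inr (Or.inl ⟨hb, ha⟩)
    · rcases h₁ with rfl | h₁
      · exact h₂
      · rcases h₂ with rfl | h₂
        · exact Or.inr h₁
        · rcases h₁ with ⟨ha, hb⟩ | ⟨ha, hb⟩
          · rcases h₂ with ⟨hb', hc⟩ | ⟨hb', hc⟩
            · exact Or.inr (Or.inl ⟨ha, hc⟩)
            · exact Or.inl (ha.trans hc.symm)
          · rcases h₂ with ⟨hb', hc⟩ | ⟨hb', hc⟩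
            · exact Or.inl (ha.trans hc.symm)
            · exact Or.inr (Or.inr ⟨ha, hc⟩)

/-- Connecting (merging) the blocks of the points `x` and `y` of a partition. -/
def mergeBlocks {X : Type*} (p : Setoid X) (x y : X) : Setoid X :=
  p ⊔ pairSetoid x y

/-- Disconnecting the point `x` from its block and turning it into a singleton block. -/
def disconnect {X : Type*} (p : Setoid X) (x : X) : Setoid X where
  r a b := a = b ∨ (p.r a b ∧ a ≠ x ∧ b ≠ x)
  iseqv := by
    refine ⟨fun a => Or.inl rfl, fun {a b} h => ?_, fun {a b c} h₁ h₂ => ?_⟩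
    · rcases h with rfl | ⟨h, ha, hb⟩
      · exact Or.inl rfl
      · exact Or.inr ⟨p.iseqv.symm h, hb, ha⟩
    · rcases h₁ with rfl | ⟨h₁, ha, hb⟩
      · exact h₂
      · rcases h₂ with rfl | ⟨h₂, hb', hc⟩
        · exact Or.inr ⟨h₁, ha, hb⟩
        · exact Or.inr ⟨p.iseqv.trans h₁ h₂, ha, hc⟩

/-- The partition of the lower points induced by `p ∈ P(0,l)`. -/
def lowerSetoid {l : ℕ} (p : Partition 0 l) : Setoid (Fin l) :=
  Setoid.comap Sum.inr p

/-- The reindexing map for inserting `m` points after position `t` among `l` points. -/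
def insertMap (l m t : ℕ) (ht : t ≤ l) : Fin (l + m) → Fin l ⊕ Fin m := fun i =>
  if h1 : (i : ℕ) < t then Sum.inl ⟨i, lt_of_lt_of_le h1 ht⟩
  else if h2 : (i : ℕ) < t + m then Sum.inr ⟨(i : ℕ) - t, by omega⟩
  else Sum.inl ⟨(i : ℕ) - m, by have := i.isLt; omega⟩

/-- The partition in `P(0, l+m)` obtained from `p ∈ P(0,l)` by inserting `q ∈ P(0,m)`
after the `t`-th lower point of `p` (blocks of `p` and `q` kept separate). -/
def insertAt {l m : ℕ} (p : Partition 0 l) (q : Partition 0 m) (t : ℕ) (ht : t ≤ l) :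
    Partition 0 (l + m) :=
  Setoid.comap (Sum.elim (fun a : Fin 0 => a.elim0) (insertMap l m t ht))
    (sumPartition (lowerSetoid p) (lowerSetoid q))

/-- The reindexing map for the rotation moving the leftmost upper point to the
leftmost lower position. -/
def rotateMap (k l : ℕ) : Fin k ⊕ Fin (l + 1) → Fin (k + 1) ⊕ Fin l
  | Sum.inl a => Sum.inl a.succ
  | Sum.inr b => Fin.cases (Sum.inl (0 : Fin (k + 1))) (fun b' => Sum.inr b') b

/-- The rotated version of `p ∈ P(k+1, l)`: the leftmost upper point becomes the new
leftmost lower point (staying in its block). -/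
def rotate {k l : ℕ} (p : Partition (k + 1) l) : Partition k (l + 1) :=
  Setoid.comap (rotateMap k l) p

/-- The embedding of the remaining points after erasing the lower points `j` and `j+1`. -/
def eraseMap (k l j : ℕ) : Fin k ⊕ Fin l → Fin k ⊕ Fin (l + 2) :=
  Sum.map id fun b =>
    if (b : ℕ) < j then ⟨(b : ℕ), by have := b.isLt; omega⟩
    else ⟨(b : ℕ) + 2, by have := b.isLt; omega⟩

/-- The partition in `P(k,l)` obtained from `p ∈ P(k,l+2)` by connecting the blocks of
the `j`-th and `(j+1)`-th lower points and then erasing those two points. -/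
def erasePair {k l : ℕ} (p : Partition k (l + 2)) (j : Fin (l + 1)) : Partition k l :=
  Setoid.comap (eraseMap k l j)
    (mergeBlocks p (Sum.inr ⟨(j : ℕ), by have := j.isLt; omega⟩)
      (Sum.inr ⟨(j : ℕ) + 1, by have := j.isLt; omega⟩))

/-- The non-unital relations `R(p)` relative to a projection `P₀`:
`P₀·∑_γ δ_p(γ,β) u_{γ₁α₁}⋯u_{γₖαₖ} = (∑_{γ'} δ_p(α,γ') u_{β₁γ'₁}⋯u_{β_lγ'_l})·P₀`,
with the conventions `δ_p(∅,β)·P₀` resp. `δ_p(α,∅)·P₀` for `k = 0` resp. `l = 0`. -/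
def SatisfiesRelNU {A : Type*} [NonUnitalRing A] {n : ℕ} (P₀ : A)
    (u : Fin n → Fin n → A) {k l : ℕ} (p : Partition k l) : Prop :=
  ∀ (α : Fin k → Fin n) (β : Fin l → Fin n),
    (∑ γ : Fin k → Fin n,
      if labelsMatch p γ β then
        (List.ofFn fun s => u (γ s) (α s)).foldl (· * ·) P₀ else 0)
    = ∑ γ' : Fin l → Fin n,
      if labelsMatch p α γ' then
        (List.ofFn fun t => u (β t) (γ' t)).foldr (· * ·) P₀ else 0

-- auxiliary defs
def pIdx (l m t : ℕ) (ht : t ≤ l) (j : Fin l) : Fin (l + m) :=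
  if (j : ℕ) < t then ⟨j, by omega⟩ else ⟨(j : ℕ) + m, by omega⟩

def qIdx (l m t : ℕ) (ht : t ≤ l) (j : Fin m) : Fin (l + m) := ⟨t + j, by omega⟩

lemma insertMap_of_lt {l m t : ℕ} {ht : t ≤ l} {i : Fin (l + m)} (h : (i : ℕ) < t) :
    insertMap l m t ht i = Sum.inl ⟨i, by omega⟩ := dif_pos h

lemma insertMap_of_mid {l m t : ℕ} {ht : t ≤ l} {i : Fin (l + m)}
    (h1 : ¬ (i : ℕ) < t) (h2 : (i : ℕ) < t + m) :
    insertMap l m t ht i = Sum.inr ⟨(i : ℕ) - t, by omega⟩ :=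
  (dif_neg h1).trans (dif_pos h2)

lemma insertMap_of_ge {l m t : ℕ} {ht : t ≤ l} {i : Fin (l + m)}
    (h2 : ¬ (i : ℕ) < t + m) :
    insertMap l m t ht i = Sum.inl ⟨(i : ℕ) - m, by have := i.isLt; omega⟩ :=
  (dif_neg (by omega)).trans (dif_neg h2)

lemma pIdx_of_lt {l m t : ℕ} {ht : t ≤ l} {j : Fin l} (h : (j : ℕ) < t) :
    pIdx l m t ht j = ⟨j, by omega⟩ := if_pos h

lemma pIdx_of_ge {l m t : ℕ} {ht : t ≤ l} {j : Fin l} (h : ¬ (j : ℕ) < t) :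
    pIdx l m t ht j = ⟨(j : ℕ) + m, by omega⟩ := if_neg h

lemma insertMap_pIdx (l m t : ℕ) (ht : t ≤ l) (j : Fin l) :
    insertMap l m t ht (pIdx l m t ht j) = Sum.inl j := by
  by_cases h : (j : ℕ) < t
  · rw [pIdx_of_lt h, insertMap_of_lt (show (j : ℕ) < t from h)]
  · rw [pIdx_of_ge h, insertMap_of_ge (show ¬ (j : ℕ) + m < t + m by omega)]
    congr 1
    exact Fin.ext (show (j : ℕ) + m - m = (j : ℕ) by omega)

lemma insertMap_qIdx (l m t : ℕ) (ht : t ≤ l) (j : Fin m) :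
    insertMap l m t ht (qIdx l m t ht j) = Sum.inr j := by
  rw [show qIdx l m t ht j = ⟨t + j, by omega⟩ from rfl,
    insertMap_of_mid (show ¬ t + (j : ℕ) < t by omega)
      (show t + (j : ℕ) < t + m by have := j.isLt; omega)]
  congr 1
  exact Fin.ext (show t + (j : ℕ) - t = (j : ℕ) by omega)

lemma eq_pIdx_of {l m t : ℕ} {ht : t ≤ l} {i : Fin (l + m)} {a : Fin l}
    (h : insertMap l m t ht i = Sum.inl a) : i = pIdx l m t ht a := by
  by_cases h1 : (i : ℕ) < t
  · rw [insertMap_of_lt h1] at h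
    obtain rfl := Sum.inl_injective h
    have hc : ((⟨(i : ℕ), by omega⟩ : Fin l) : ℕ) < t := h1
    rw [pIdx_of_lt hc]
  · by_cases h2 : (i : ℕ) < t + m
    · rw [insertMap_of_mid h1 h2] at h
      exact absurd h (by simp)
    · rw [insertMap_of_ge h2] at h
      obtain rfl := Sum.inl_injective h
      have hc : ¬ ((⟨(i : ℕ) - m, by have := i.isLt; omega⟩ : Fin l) : ℕ) < t := by
        show ¬ (i : ℕ) - m < t; omega
      rw [pIdx_of_ge hc]
      exact Fin.ext (show (i : ℕ) = (i : ℕ) - m + m by omega)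

lemma eq_qIdx_of {l m t : ℕ} {ht : t ≤ l} {i : Fin (l + m)} {a : Fin m}
    (h : insertMap l m t ht i = Sum.inr a) : i = qIdx l m t ht a := by
  by_cases h1 : (i : ℕ) < t
  · rw [insertMap_of_lt h1] at h; exact absurd h (by simp)
  · by_cases h2 : (i : ℕ) < t + m
    · rw [insertMap_of_mid h1 h2] at h
      obtain rfl := Sum.inr_injective h
      exact Fin.ext (show (i : ℕ) = t + ((i : ℕ) - t) by omega)
    · rw [insertMap_of_ge h2] at h; exact absurd h (by simp)

lemma labelsMatch_insertAt_iff {n l m : ℕ} (p : Partition 0 l) (q : Partition 0 m)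
    (t : ℕ) (ht : t ≤ l) (α : Fin 0 → Fin n) (β : Fin (l + m) → Fin n) :
    labelsMatch (insertAt p q t ht) α β ↔
      (labelsMatch p α fun j => β (pIdx l m t ht j)) ∧
      (labelsMatch q α fun j => β (qIdx l m t ht j)) := by
  constructor
  · intro h
    constructor
    · intro x y hxy
      cases x with
      | inl a => exact a.elim0
      | inr i =>
        cases y with
        | inl a => exact a.elim0
        | inr j =>
          have := h (Sum.inr (pIdx l m t ht i)) (Sum.inr (pIdx l m t ht j)) ?_
          · simpa using this
          · show Sum.LiftRel _ _ (insertMap l m t ht (pIdx l m t ht i))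
              (insertMap l m t ht (pIdx l m t ht j))
            rw [insertMap_pIdx, insertMap_pIdx]
            exact Sum.LiftRel.inl hxy
    · intro x y hxy
      cases x with
      | inl a => exact a.elim0
      | inr i =>
        cases y with
        | inl a => exact a.elim0
        | inr j =>
          have := h (Sum.inr (qIdx l m t ht i)) (Sum.inr (qIdx l m t ht j)) ?_
          · simpa using this
          · show Sum.LiftRel _ _ (insertMap l m t ht (qIdx l m t ht i))
              (insertMap l m t ht (qIdx l m t ht j))
            rw [insertMap_qIdx, insertMap_qIdx]
            exact Sum.LiftRel.inr hxy
  · rintro ⟨h1, h2⟩ x y hxy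
    cases x with
    | inl a => exact a.elim0
    | inr i =>
      cases y with
      | inl a => exact a.elim0
      | inr j =>
        have hxy' : Sum.LiftRel (lowerSetoid p).r (lowerSetoid q).r
            (insertMap l m t ht i) (insertMap l m t ht j) := hxy
        rcases hi : insertMap l m t ht i with a | a <;>
          rcases hj : insertMap l m t ht j with b | b <;>
          rw [hi, hj] at hxy'
        · cases hxy' with
          | inl hab =>
            have := h1 (Sum.inr a) (Sum.inr b) hab
            simp only [Sum.elim_inr] at this ⊢
            rw [eq_pIdx_of hi, eq_pIdx_of hj]
            exact this
        · cases hxy'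
        · cases hxy'
        · cases hxy' with
          | inr hab =>
            have := h2 (Sum.inr a) (Sum.inr b) hab
            simp only [Sum.elim_inr] at this ⊢
            rw [eq_qIdx_of hi, eq_qIdx_of hj]
            exact this



def insFnEquiv (n l m t : ℕ) (ht : t ≤ l) :
    ((Fin l → Fin n) × (Fin m → Fin n)) ≃ (Fin (l + m) → Fin n) where
  toFun x := fun s => Sum.elim x.1 x.2 (insertMap l m t ht s)
  invFun γ := (fun j => γ (pIdx l m t ht j), fun j => γ (qIdx l m t ht j))
  left_inv x := by
    obtain ⟨γp, γq⟩ := x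
    refine Prod.ext ?_ ?_ <;> funext j <;> simp [insertMap_pIdx, insertMap_qIdx]
  right_inv γ := by
    funext s
    show Sum.elim (fun j => γ (pIdx l m t ht j)) (fun j => γ (qIdx l m t ht j))
      (insertMap l m t ht s) = γ s
    rcases h : insertMap l m t ht s with a | a
    · rw [Sum.elim_inl, ← eq_pIdx_of h]
    · rw [Sum.elim_inr, ← eq_qIdx_of h]

lemma ofFn_cast {A : Type*} {a b : ℕ} (h : a = b) (f : Fin b → A) :
    List.ofFn f = List.ofFn (fun i : Fin a => f (Fin.cast h i)) := by
  subst h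
  rfl

lemma prod_split3 {A : Type*} [Monoid A] (l m t : ℕ) (ht : t ≤ l) (f : Fin (l + m) → A) :
    (List.ofFn f).prod =
      (List.ofFn fun i : Fin t => f ⟨i, by omega⟩).prod *
      ((List.ofFn fun j : Fin m => f ⟨t + j, by have := j.isLt; omega⟩).prod *
       (List.ofFn fun i : Fin (l - t) => f ⟨t + m + i, by have := i.isLt; omega⟩).prod) := by
  have h : t + (m + (l - t)) = l + m := by omega
  rw [ofFn_cast h f, List.ofFn_add, List.prod_append, List.ofFn_add, List.prod_append]
  refine congrArg₂ (· * ·) ?_ (congrArg₂ (· * ·) ?_ ?_) <;>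
    refine congrArg List.prod (congrArg List.ofFn (funext fun i => ?_)) <;>
    exact congrArg f (Fin.ext (by
      simp only [Fin.coe_cast, Fin.coe_castAdd, Fin.coe_natAdd, Fin.val_castLE]; try omega))

lemma prod_split2 {A : Type*} [Monoid A] (l t : ℕ) (ht : t ≤ l) (f : Fin l → A) :
    (List.ofFn f).prod =
      (List.ofFn fun i : Fin t => f ⟨i, by omega⟩).prod *
      (List.ofFn fun i : Fin (l - t) => f ⟨t + i, by have := i.isLt; omega⟩).prod := by
  have h : t + (l - t) = l := by omega
  rw [ofFn_cast h f, List.ofFn_add, List.prod_append]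
  refine congrArg₂ (· * ·) ?_ ?_ <;>
    refine congrArg List.prod (congrArg List.ofFn (funext fun i => ?_)) <;>
    exact congrArg f (Fin.ext (by
      simp only [Fin.coe_cast, Fin.coe_castAdd, Fin.coe_natAdd, Fin.val_castLE]; try omega))

/-- Appendix B (insertion lemma, for a fixed representation): if the relations `R(p)`
and `R(q)` hold for `p ∈ P(0,l)` and `q ∈ P(0,m)`, then for every `0 ≤ t ≤ l` the
relations of the partition obtained from placing `q` between the `t`-th and
`(t+1)`-th point of `p` hold as well. -/
theorem satisfiesRel_insertAt {A : Type*} [CStarAlgebra A] {n : ℕ}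
    (u : Fin n → Fin n → A) (hsa : ∀ i j, IsSelfAdjoint (u i j))
    {l m : ℕ} (p : Partition 0 l) (q : Partition 0 m)
    (hp : SatisfiesRel u p) (hq : SatisfiesRel u q) (t : ℕ) (ht : t ≤ l) :
    SatisfiesRel u (insertAt p q t ht) := by
  intro α β
  haveI : Unique (Fin 0 → Fin n) := ⟨⟨fun i => i.elim0⟩, fun f => funext fun i => i.elim0⟩
  -- evaluation of the k = 0 side of a relation
  have h0 : ∀ {k : ℕ} (r : Partition 0 k) (βr : Fin k → Fin n), SatisfiesRel u r →
      (∑ γ' : Fin k → Fin n,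
        if labelsMatch r α γ' then (List.ofFn fun s => u (βr s) (γ' s)).prod else 0)
        = if labelsMatch r α βr then 1 else 0 := by
    intro k r βr hr
    rw [← hr α βr, Fintype.sum_unique, Subsingleton.elim (default : Fin 0 → Fin n) α]
    simp
  -- the three partial products
  set P1 : (Fin l → Fin n) → A := fun γp =>
    (List.ofFn fun i : Fin t => u (β ⟨i, by omega⟩) (γp ⟨i, by omega⟩)).prod with hP1
  set P3 : (Fin l → Fin n) → A := fun γp =>
    (List.ofFn fun i : Fin (l - t) =>
      u (β ⟨t + m + i, by have := i.isLt; omega⟩) (γp ⟨t + i, by have := i.isLt; omega⟩)).prod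
    with hP3
  set Q : (Fin m → Fin n) → A := fun γq =>
    (List.ofFn fun j : Fin m => u (β (qIdx l m t ht j)) (γq j)).prod with hQ
  have hprod : ∀ (γp : Fin l → Fin n) (γq : Fin m → Fin n),
      (List.ofFn fun s => u (β s) (Sum.elim γp γq (insertMap l m t ht s))).prod
        = P1 γp * (Q γq * P3 γp) := by
    intro γp γq
    rw [prod_split3 l m t ht, hP1, hP3, hQ]
    refine congrArg₂ (· * ·) ?_ (congrArg₂ (· * ·) ?_ ?_) <;>
      refine congrArg List.prod (congrArg List.ofFn (funext fun i => ?_))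
    · have hc : ((⟨(i : ℕ), by omega⟩ : Fin (l + m)) : ℕ) < t := i.isLt
      rw [insertMap_of_lt hc, Sum.elim_inl]
    · have hc1 : ¬ ((⟨t + (i : ℕ), by have := i.isLt; omega⟩ : Fin (l + m)) : ℕ) < t := by
        show ¬ t + (i : ℕ) < t; omega
      have hc2 : ((⟨t + (i : ℕ), by have := i.isLt; omega⟩ : Fin (l + m)) : ℕ) < t + m := by
        show t + (i : ℕ) < t + m; have := i.isLt; omega
      rw [insertMap_of_mid hc1 hc2, Sum.elim_inr]
      exact congrArg _ (congrArg γq (Fin.ext (show t + (i : ℕ) - t = i by omega)))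
    · have hc : ¬ ((⟨t + m + (i : ℕ), by have := i.isLt; omega⟩ : Fin (l + m)) : ℕ) < t + m := by
        show ¬ t + m + (i : ℕ) < t + m; omega
      rw [insertMap_of_ge hc, Sum.elim_inl]
      exact congrArg _ (congrArg γp (Fin.ext (show t + m + (i : ℕ) - m = t + i by omega)))
  have hprod2 : ∀ (γp : Fin l → Fin n),
      (List.ofFn fun j => u (β (pIdx l m t ht j)) (γp j)).prod = P1 γp * P3 γp := by
    intro γp
    rw [prod_split2 l t ht, hP1, hP3]
    refine congrArg₂ (· * ·) ?_ ?_ <;>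
      refine congrArg List.prod (congrArg List.ofFn (funext fun i => ?_))
    · have hc : ((⟨(i : ℕ), by omega⟩ : Fin l) : ℕ) < t := i.isLt
      rw [pIdx_of_lt hc]
    · have hc : ¬ ((⟨t + (i : ℕ), by have := i.isLt; omega⟩ : Fin l) : ℕ) < t := by
        show ¬ t + (i : ℕ) < t; omega
      rw [pIdx_of_ge hc]
      exact congrArg₂ u (congrArg β (Fin.ext (show t + (i : ℕ) + m = t + m + i by omega))) rfl
  have hcond : ∀ (γp : Fin l → Fin n) (γq : Fin m → Fin n),
      labelsMatch (insertAt p q t ht) α (fun s => Sum.elim γp γq (insertMap l m t ht s)) ↔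
        (labelsMatch p α γp ∧ labelsMatch q α γq) := by
    intro γp γq
    rw [labelsMatch_insertAt_iff]
    simp only [insertMap_pIdx, insertMap_qIdx, Sum.elim_inl, Sum.elim_inr]
  have hqsum := h0 q (fun j => β (qIdx l m t ht j)) hq
  have hpsum := h0 p (fun j => β (pIdx l m t ht j)) hp
  -- left-hand side
  have hL : (∑ γ : Fin 0 → Fin n,
      if labelsMatch (insertAt p q t ht) γ β then
        (List.ofFn fun s => u (γ s) (α s)).prod else 0)
      = if labelsMatch (insertAt p q t ht) α β then 1 else 0 := by
    rw [Fintype.sum_unique, Subsingleton.elim (default : Fin 0 → Fin n) α]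
    simp
  rw [hL]
  -- reindex the right-hand side
  have step1 : (∑ γ' : Fin (l + m) → Fin n,
      if labelsMatch (insertAt p q t ht) α γ' then
        (List.ofFn fun s => u (β s) (γ' s)).prod else 0)
      = ∑ x : (Fin l → Fin n) × (Fin m → Fin n),
          if labelsMatch p α x.1 ∧ labelsMatch q α x.2 then
            P1 x.1 * (Q x.2 * P3 x.1) else 0 := by
    refine (Fintype.sum_equiv (insFnEquiv n l m t ht) _ _ ?_).symm
    rintro ⟨γp, γq⟩
    exact if_congr ((hcond γp γq).symm) ((hprod γp γq).symm) rfl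
  rw [step1, Fintype.sum_prod_type]
  have step2 : (∑ γp : Fin l → Fin n, ∑ γq : Fin m → Fin n,
      if labelsMatch p α γp ∧ labelsMatch q α γq then
        P1 γp * (Q γq * P3 γp) else 0)
      = ∑ γp : Fin l → Fin n,
          if labelsMatch p α γp then
            P1 γp * ((if labelsMatch q α (fun j => β (qIdx l m t ht j)) then (1 : A) else 0)
              * P3 γp) else 0 := by
    refine Finset.sum_congr rfl fun γp _ => ?_
    by_cases hLp : labelsMatch p α γp
    · simp only [hLp, true_and, if_true]
      rw [← hqsum, Finset.sum_mul, Finset.mul_sum]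
      refine Finset.sum_congr rfl fun γq _ => ?_
      by_cases hLq : labelsMatch q α γq
      · rw [if_pos hLq, if_pos hLq]
      · rw [if_neg hLq, if_neg hLq, zero_mul, mul_zero]
    · simp [hLp]
  rw [step2]
  by_cases hcq : labelsMatch q α (fun j => β (qIdx l m t ht j))
  · simp only [if_pos hcq, one_mul]
    have step3 : (∑ γp : Fin l → Fin n,
        if labelsMatch p α γp then P1 γp * P3 γp else 0)
        = if labelsMatch p α (fun j => β (pIdx l m t ht j)) then 1 else 0 := by
      rw [← hpsum]
      exact Finset.sum_congr rfl fun γp _ => if_congr Iff.rfl (hprod2 γp).symm rfl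
    rw [step3, labelsMatch_insertAt_iff p q t ht α β]
    by_cases hcp : labelsMatch p α (fun j => β (pIdx l m t ht j)) <;>
      simp [hcp, hcq]
  · simp only [if_neg hcq, zero_mul, mul_zero, ite_self, Finset.sum_const_zero]
    rw [labelsMatch_insertAt_iff p q t ht α β]
    simp [hcq]

end PartitionCstar
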